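/- Let k, l, m ∈ ℝ³ with l, m linearly independent, |l| ≠ |m|, l + m = k ≠ 0, and let G ∈ ℝ³ with G · k = 0. Then there exist X, Y ∈ ℝ³ with X · l = 0, Y · m = 0 and (m·X) P_k Y + (l·Y) P_k X + 2G = 0. -/

import Mathlib

open scoped RealInnerProductSpace

noncomputable section

open Matrix


lemma ortho_triple_zero (k n w r : EuclideanSpace ℝ (Fin 3)) (hk : k ≠ 0) (hn : n ≠ 0) (hw : w ≠ 0)
    (hkn : ⟪k, n⟫ = 0) (hkw : ⟪k, w⟫ = 0) (hnw : ⟪n, w⟫ = 0)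
    (hrk : ⟪r, k⟫ = 0) (hrn : ⟪r, n⟫ = 0) (hrw : ⟪r, w⟫ = 0) : r = 0 := by
  have hnk : ⟪n, k⟫ = 0 := by rw [real_inner_comm]; exact hkn
  have hwk : ⟪w, k⟫ = 0 := by rw [real_inner_comm]; exact hkw
  have hwn : ⟪w, n⟫ = 0 := by rw [real_inner_comm]; exact hnw
  have hli : LinearIndependent ℝ ![k, n, w] := by
    rw [Fintype.linearIndependent_iff]
    intro g hg
    have e : g 0 • k + g 1 • n + g 2 • w = 0 := by
      have := hg; rwa [Fin.sum_univ_three] at this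
    have h0 : g 0 = 0 := by
      have h := congrArg (fun x => ⟪x, k⟫) e
      simp only [inner_add_left, real_inner_smul_left, inner_zero_left, hnk, hwk] at h
      have hkk : ⟪k, k⟫ ≠ 0 := inner_self_ne_zero.mpr hk
      have h2 : g 0 * ⟪k, k⟫ = 0 := by linarith
      exact (mul_eq_zero.mp h2).resolve_right hkk
    have h1 : g 1 = 0 := by
      have h := congrArg (fun x => ⟪x, n⟫) e
      simp only [inner_add_left, real_inner_smul_left, inner_zero_left, hkn, hwn] at h
      have hnn : ⟪n, n⟫ ≠ 0 := inner_self_ne_zero.mpr hn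
      have h2 : g 1 * ⟪n, n⟫ = 0 := by linarith
      exact (mul_eq_zero.mp h2).resolve_right hnn
    have h2 : g 2 = 0 := by
      have h := congrArg (fun x => ⟪x, w⟫) e
      simp only [inner_add_left, real_inner_smul_left, inner_zero_left, hkw, hnw] at h
      have hww : ⟪w, w⟫ ≠ 0 := inner_self_ne_zero.mpr hw
      have h2 : g 2 * ⟪w, w⟫ = 0 := by linarith
      exact (mul_eq_zero.mp h2).resolve_right hww
    intro i; fin_cases i <;> assumption
  have hspan : Submodule.span ℝ (Set.range ![k, n, w]) = ⊤ :=
    hli.span_eq_top_of_card_eq_finrank (by simp)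
  have hle : Submodule.span ℝ (Set.range ![k, n, w]) ≤ (ℝ ∙ r)ᗮ := by
    rw [Submodule.span_le]
    intro x hx
    rw [SetLike.mem_coe, Submodule.mem_orthogonal_singleton_iff_inner_right]
    obtain ⟨i, rfl⟩ := hx
    fin_cases i
    · exact hrk
    · exact hrn
    · exact hrw
  have hmem : r ∈ (ℝ ∙ r)ᗮ := by
    rw [hspan] at hle; exact hle Submodule.mem_top
  exact inner_self_eq_zero.mp (Submodule.mem_orthogonal_singleton_iff_inner_right.mp hmem)

lemma inner_eq_dot (x y : EuclideanSpace ℝ (Fin 3)) : ⟪x, y⟫ = (x : Fin 3 → ℝ) ⬝ᵥ (y : Fin 3 → ℝ) := by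
  simp [PiLp.inner_apply, dotProduct, RCLike.inner_apply, mul_comm]

/-- The orthogonal projection of `ℝ³` onto `k^⊥`. -/
def Pk (k η : EuclideanSpace ℝ (Fin 3)) : EuclideanSpace ℝ (Fin 3) :=
  η - ((⟪k, η⟫) / ‖k‖ ^ 2) • k

set_option maxHeartbeats 1000000 in
/-- Solvability of the single-mode control system: for `l, m` linearly independent
with `|l| ≠ |m|`, `l + m = k ≠ 0`, and any `G ⊥ k`, there exist `X ⊥ l`, `Y ⊥ m` with
`(m·X) P_k Y + (l·Y) P_k X + 2G = 0`. -/
theorem control_solvability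
    (k l m G : EuclideanSpace ℝ (Fin 3))
    (hind : LinearIndependent ℝ ![l, m]) (hnorm : ‖l‖ ≠ ‖m‖)
    (hlm : l + m = k) (hk : k ≠ 0) (hG : ⟪G, k⟫ = 0) :
    ∃ X Y : EuclideanSpace ℝ (Fin 3), ⟪X, l⟫ = 0 ∧ ⟪Y, m⟫ = 0 ∧
      (⟪m, X⟫) • Pk k Y + (⟪l, Y⟫) • Pk k X + (2 : ℝ) • G = 0 := by
  have hl0 : l ≠ 0 := by have := hind.ne_zero 0; simpa using this
  have hm0 : m ≠ 0 := by have := hind.ne_zero 1; simpa using this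
  obtain ⟨a, hll⟩ : ∃ x : ℝ, (⟪l, l⟫ : ℝ) = x := ⟨_, rfl⟩
  obtain ⟨b, hmm2⟩ : ∃ x : ℝ, (⟪m, m⟫ : ℝ) = x := ⟨_, rfl⟩
  obtain ⟨t, hlm2⟩ : ∃ x : ℝ, (⟪l, m⟫ : ℝ) = x := ⟨_, rfl⟩
  have hml : (⟪m, l⟫ : ℝ) = t := by rw [real_inner_comm]; exact hlm2
  have hanorm : a = ‖l‖ ^ 2 := by rw [← hll]; exact real_inner_self_eq_norm_sq l
  have hbnorm : b = ‖m‖ ^ 2 := by rw [← hmm2]; exact real_inner_self_eq_norm_sq m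
  have ha : 0 < a := by rw [hanorm]; exact pow_pos (norm_pos_iff.mpr hl0) 2
  have hb : 0 < b := by rw [hbnorm]; exact pow_pos (norm_pos_iff.mpr hm0) 2
  have hpair := LinearIndependent.pair_iff.mp hind
  have h1 : t < ‖l‖ * ‖m‖ := by
    rw [← hlm2]
    apply inner_lt_norm_mul_iff_real.mpr
    intro h
    have := hpair ‖m‖ (-‖l‖) (by rw [neg_smul, h]; abel)
    exact (norm_ne_zero_iff.mpr hm0) this.1
  have h2 : -t < ‖l‖ * ‖m‖ := by
    have hside : ‖-m‖ • l ≠ ‖l‖ • (-m) := by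
      intro h
      rw [norm_neg, smul_neg] at h
      have := hpair ‖m‖ ‖l‖ (by rw [h]; abel)
      exact (norm_ne_zero_iff.mpr hm0) this.1
    have := inner_lt_norm_mul_iff_real.mpr hside
    rwa [inner_neg_right, norm_neg, hlm2] at this
  have hCS : t ^ 2 < a * b := by
    rw [hanorm, hbnorm]
    nlinarith [mul_pos (sub_pos.mpr h1) (show (0:ℝ) < ‖l‖ * ‖m‖ + t by linarith)]
  have hab : a ≠ b := by
    rw [hanorm, hbnorm]
    intro h
    rw [sq_eq_sq_iff_abs_eq_abs, abs_of_nonneg (norm_nonneg _),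
      abs_of_nonneg (norm_nonneg _)] at h
    exact hnorm h
  obtain ⟨κ, hκ_def⟩ : ∃ x : ℝ, x = a + 2 * t + b := ⟨_, rfl⟩
  have hknormsq : ‖k‖ ^ 2 = κ := by
    rw [← hlm, ← real_inner_self_eq_norm_sq, real_inner_add_add_self, hll, hlm2, hmm2, hκ_def]
  have hκpos : 0 < κ := by rw [← hknormsq]; exact pow_pos (norm_pos_iff.mpr hk) 2
  have hκ : κ ≠ 0 := ne_of_gt hκpos
  have hkk : (⟪k, k⟫ : ℝ) = κ := by rw [real_inner_self_eq_norm_sq, hknormsq]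
  obtain ⟨n, hn0, hln, hmn⟩ : ∃ n : EuclideanSpace ℝ (Fin 3),
      n ≠ 0 ∧ ⟪l, n⟫ = 0 ∧ ⟪m, n⟫ = 0 :=
    ⟨WithLp.toLp 2 (crossProduct l m), by
        have h : LinearIndependent ℝ ![(l : Fin 3 → ℝ), (m : Fin 3 → ℝ)] := by
          have := hind.map' (WithLp.linearEquiv 2 ℝ (Fin 3 → ℝ)).toLinearMap
            (WithLp.linearEquiv 2 ℝ (Fin 3 → ℝ)).ker
          have e : ⇑(WithLp.linearEquiv 2 ℝ (Fin 3 → ℝ)).toLinearMap ∘ ![l, m] =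
              ![(l : Fin 3 → ℝ), (m : Fin 3 → ℝ)] := by
            ext i j; fin_cases i <;> rfl
          rw [e] at this; exact this
        have := crossProduct_ne_zero_iff_linearIndependent.mpr h
        intro h0; apply this
        simpa using congrArg (WithLp.ofLp) h0,
      by rw [inner_eq_dot]; exact dot_self_cross _ _,
      by rw [inner_eq_dot]; exact dot_cross_self _ _⟩
  have hnl : (⟪n, l⟫ : ℝ) = 0 := by rw [real_inner_comm]; exact hln
  have hnm : (⟪n, m⟫ : ℝ) = 0 := by rw [real_inner_comm]; exact hmn
  have hkn : (⟪k, n⟫ : ℝ) = 0 := by rw [← hlm, inner_add_left, hln, hmn]; ring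
  have hnk : (⟪n, k⟫ : ℝ) = 0 := by rw [real_inner_comm]; exact hkn
  have hkl : (⟪k, l⟫ : ℝ) = a + t := by rw [← hlm, inner_add_left, hll, hml]
  have hlk : (⟪l, k⟫ : ℝ) = a + t := by rw [real_inner_comm]; exact hkl
  obtain ⟨w, hw_def⟩ : ∃ w : EuclideanSpace ℝ (Fin 3), w = κ • l - (a + t) • k := ⟨_, rfl⟩
  have hkw : (⟪k, w⟫ : ℝ) = 0 := by
    rw [hw_def, inner_sub_right, real_inner_smul_right, real_inner_smul_right, hkl, hkk]
    ring
  have hwk : (⟪w, k⟫ : ℝ) = 0 := by rw [real_inner_comm]; exact hkw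
  have hnw : (⟪n, w⟫ : ℝ) = 0 := by
    rw [hw_def, inner_sub_right, real_inner_smul_right, real_inner_smul_right, hnl, hnk]; ring
  have hwn : (⟪w, n⟫ : ℝ) = 0 := by rw [real_inner_comm]; exact hnw
  have hlw : (⟪l, w⟫ : ℝ) = κ * a - (a + t) * (a + t) := by
    rw [hw_def, inner_sub_right, real_inner_smul_right, real_inner_smul_right, hll, hlk]
  have hD : (0:ℝ) < a * b - t ^ 2 := by linarith
  have hww : (⟪w, w⟫ : ℝ) = κ * (a * b - t ^ 2) := by
    have h : (⟪w, w⟫ : ℝ) = κ * ⟪l, w⟫ - (a + t) * ⟪k, w⟫ := by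
      nth_rewrite 1 [hw_def]
      rw [inner_sub_left, real_inner_smul_left, real_inner_smul_left]
    rw [h, hkw, hlw, hκ_def]
    ring
  have hwpos : 0 < (⟪w, w⟫ : ℝ) := by
    rw [hww]; exact mul_pos hκpos hD
  have hw0 : w ≠ 0 := inner_self_ne_zero.mp (ne_of_gt hwpos)
  have hN : (⟪n, n⟫ : ℝ) ≠ 0 := inner_self_ne_zero.mpr hn0
  obtain ⟨A, hA_def⟩ : ∃ x : ℝ, x = (-2) * ⟪n, G⟫ / ⟪n, n⟫ := ⟨_, rfl⟩
  obtain ⟨B, hB_def⟩ : ∃ x : ℝ, x = (-2) * ⟪w, G⟫ / ⟪w, w⟫ := ⟨_, rfl⟩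
  obtain ⟨r, hr_def⟩ : ∃ r : EuclideanSpace ℝ (Fin 3), r = (-2 : ℝ) • G - A • n - B • w :=
    ⟨_, rfl⟩
  have hGn : (⟪G, n⟫ : ℝ) = ⟪n, G⟫ := real_inner_comm n G
  have hGw : (⟪G, w⟫ : ℝ) = ⟪w, G⟫ := real_inner_comm w G
  have hrk : (⟪r, k⟫ : ℝ) = 0 := by
    rw [hr_def, inner_sub_left, inner_sub_left, real_inner_smul_left, real_inner_smul_left,
      real_inner_smul_left, hG, hnk, hwk]
    ring
  have hrn : (⟪r, n⟫ : ℝ) = 0 := by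
    rw [hr_def, inner_sub_left, inner_sub_left, real_inner_smul_left, real_inner_smul_left,
      real_inner_smul_left, hGn, hwn, hA_def, div_mul_cancel₀ _ hN]
    ring
  have hrw : (⟪r, w⟫ : ℝ) = 0 := by
    rw [hr_def, inner_sub_left, inner_sub_left, real_inner_smul_left, real_inner_smul_left,
      real_inner_smul_left, hGw, hnw, hB_def, div_mul_cancel₀ _ (ne_of_gt hwpos)]
    ring
  have hr0 : r = 0 := ortho_triple_zero k n w r hk hn0 hw0 hkn hkw hnw hrk hrn hrw
  have hG2 : (2 : ℝ) • G = (-A) • n + (-B) • w := by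
    rw [hr_def, sub_sub, sub_eq_zero] at hr0
    rw [show ((2 : ℝ)) • G = -((-2 : ℝ) • G) by module, hr0]
    module
  -- scalars for the solution
  have hba : b - a ≠ 0 := sub_ne_zero.mpr (Ne.symm hab)
  obtain ⟨s, hs⟩ : ∃ x : ℝ, x * ((a * b - t ^ 2) * (b - a)) = B * κ :=
    ⟨B * κ / ((a * b - t ^ 2) * (b - a)), by field_simp⟩
  obtain ⟨y2, hy⟩ : ∃ x : ℝ, x * (a * b - t ^ 2) = A := ⟨A / (a * b - t ^ 2), by field_simp⟩
  set X : EuclideanSpace ℝ (Fin 3) := a • m - t • l with hX_def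
  set Y : EuclideanSpace ℝ (Fin 3) := s • (b • l - t • m) + y2 • n with hY_def
  have hlX : (⟪l, X⟫ : ℝ) = 0 := by
    rw [hX_def, inner_sub_right, real_inner_smul_right, real_inner_smul_right, hlm2, hll]
    ring
  have hmX : (⟪m, X⟫ : ℝ) = a * b - t ^ 2 := by
    rw [hX_def, inner_sub_right, real_inner_smul_right, real_inner_smul_right, hmm2, hml]
    ring
  have hkX : (⟪k, X⟫ : ℝ) = a * b - t ^ 2 := by
    rw [← hlm, inner_add_left, hlX, hmX]; ring
  have hlY : (⟪l, Y⟫ : ℝ) = s * (a * b - t ^ 2) := by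
    rw [hY_def, inner_add_right, real_inner_smul_right, real_inner_smul_right,
      inner_sub_right, real_inner_smul_right, real_inner_smul_right, hll, hlm2, hln]
    ring
  have hmY : (⟪m, Y⟫ : ℝ) = 0 := by
    rw [hY_def, inner_add_right, real_inner_smul_right, real_inner_smul_right,
      inner_sub_right, real_inner_smul_right, real_inner_smul_right, hml, hmm2, hmn]
    ring
  have hkY : (⟪k, Y⟫ : ℝ) = s * (a * b - t ^ 2) := by
    rw [← hlm, inner_add_left, hlY, hmY]; ring
  have hXl : (⟪X, l⟫ : ℝ) = 0 := by rw [real_inner_comm]; exact hlX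
  have hYm : (⟪Y, m⟫ : ℝ) = 0 := by rw [real_inner_comm]; exact hmY
  refine ⟨X, Y, hXl, hYm, ?_⟩
  have hPkY : Pk k Y = Y - ((s * (a * b - t ^ 2)) / κ) • k := by
    unfold Pk; rw [hkY, hknormsq]
  have hPkX : Pk k X = X - ((a * b - t ^ 2) / κ) • k := by
    unfold Pk; rw [hkX, hknormsq]
  rw [hmX, hlY, hPkY, hPkX, hG2, hX_def, hY_def, hw_def, ← hlm]
  match_scalars <;> field_simp [hκ]
  · linear_combination (κ - a - t) * hs + s * (a * b - t ^ 2) * (a - t) * hκ_def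
  · linear_combination (-(a + t)) * hs + s * (a * b - t ^ 2) * (a - t) * hκ_def
  · linear_combination hy
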